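/- Let L ≥ 1, let A_l ≥ 2 for all 1 ≤ l ≤ L, and let (K,S) ∈ 𝕄. Then ((1 + ln(2π))/2)·D_{(K,S)} ≤ C_{(K,S)} ≤ (2 + ln(2π) + (ln 2)/2)·D_{(K,S)}. -/

import Mathlib

open Real BigOperators

noncomputable section

/-- The collection 𝕄 of model indices `(K, S)`. -/
def Mset (L : ℕ) : Set (ℕ × Finset (Fin L)) :=
  {p | (p.1 = 1 ∧ p.2 = ∅) ∨ (2 ≤ p.1 ∧ p.2.Nonempty)}

/-- Dimension `D_{(K,S)}` of the model `M_{(K,S)}`. -/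
def Dks {L : ℕ} (A : Fin L → ℕ) (K : ℕ) (S : Finset (Fin L)) : ℕ :=
  (K - 1) + K * ∑ l ∈ S, (A l - 1) + ∑ l ∈ Sᶜ, (A l - 1)

/-- The complexity constant `C_{(K,S)}`. -/
def Cks {L : ℕ} (A : Fin L → ℕ) (K : ℕ) (S : Finset (Fin L)) : ℝ :=
  (Real.log (2 * Real.pi * Real.exp 1) * (Dks A K S : ℝ)
    + Real.log (4 * Real.pi * Real.exp 1)
        * ((if 2 ≤ K then (1 : ℝ) else 0) + (L : ℝ) + ((K : ℝ) - 1) * (S.card : ℝ))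
    + (if 2 ≤ K then Real.log ((K : ℝ) + 1) else 0)
    + ∑ l, Real.log ((A l : ℝ) + 1)
    + ((K : ℝ) - 1) * ∑ l ∈ S, Real.log ((A l : ℝ) + 1)) / 2

/-- **Bounds relating `C_{(K,S)}` and `D_{(K,S)}`.** -/
theorem Cks_bounds (L : ℕ) (hL : 1 ≤ L) (A : Fin L → ℕ) (hA : ∀ l, 2 ≤ A l)
    (K : ℕ) (S : Finset (Fin L)) (hm : (K, S) ∈ Mset L) :
    ((1 + Real.log (2 * Real.pi)) / 2) * (Dks A K S : ℝ) ≤ Cks A K S ∧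
    Cks A K S ≤ (2 + Real.log (2 * Real.pi) + Real.log 2 / 2) * (Dks A K S : ℝ) := by
  have hπ : (0:ℝ) < Real.pi := Real.pi_pos
  have hK1 : 1 ≤ K := by
    rcases hm with ⟨h, _⟩ | ⟨h, _⟩ <;> omega
  have hKr : (1:ℝ) ≤ (K:ℝ) := by exact_mod_cast hK1
  -- cast of sums
  have hs : ∀ (T : Finset (Fin L)),
      ((∑ l ∈ T, (A l - 1) : ℕ) : ℝ) = ∑ l ∈ T, ((A l : ℝ) - 1) := by
    intro T
    rw [Nat.cast_sum]
    refine Finset.sum_congr rfl fun l _ => ?_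
    have h1 : 1 ≤ A l := le_trans (by norm_num) (hA l)
    rw [Nat.cast_sub h1, Nat.cast_one]
  set sS : ℝ := ∑ l ∈ S, ((A l : ℝ) - 1) with hsS_def
  set sC : ℝ := ∑ l ∈ Sᶜ, ((A l : ℝ) - 1) with hsC_def
  have hcastD : (Dks A K S : ℝ) = ((K:ℝ) - 1) + (K:ℝ) * sS + sC := by
    unfold Dks
    rw [Nat.cast_add, Nat.cast_add, Nat.cast_mul, hs S, hs Sᶜ, Nat.cast_sub hK1,
      Nat.cast_one]
  have hAr : ∀ l, (2:ℝ) ≤ (A l : ℝ) := fun l => by exact_mod_cast hA l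
  -- sum lower bounds
  have hsS0 : (S.card : ℝ) ≤ sS := by
    have : ∑ l ∈ S, (1:ℝ) ≤ sS :=
      Finset.sum_le_sum fun l _ => by have := hAr l; linarith
    simpa using this
  have hsC0 : (L:ℝ) - (S.card : ℝ) ≤ sC := by
    have hcard : (Sᶜ.card : ℝ) = (L:ℝ) - (S.card : ℝ) := by
      rw [Finset.card_compl, Fintype.card_fin,
        Nat.cast_sub (le_trans (Finset.card_le_univ S) (by simp))]
    have : ∑ l ∈ Sᶜ, (1:ℝ) ≤ sC :=
      Finset.sum_le_sum fun l _ => by have := hAr l; linarith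
    rw [← hcard]; simpa using this
  have hsSnn : 0 ≤ sS := Finset.sum_nonneg fun l _ => by have := hAr l; linarith
  have hsCnn : 0 ≤ sC := Finset.sum_nonneg fun l _ => by have := hAr l; linarith
  have hcardnn : (0:ℝ) ≤ (S.card : ℝ) := by positivity
  -- log constants
  have hlA : Real.log (2 * Real.pi * Real.exp 1) = Real.log (2 * Real.pi) + 1 := by
    rw [Real.log_mul (by positivity) (Real.exp_ne_zero 1), Real.log_exp]
  have hlB : Real.log (4 * Real.pi * Real.exp 1)
      = Real.log 2 + Real.log (2 * Real.pi) + 1 := by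
    have h4 : (4:ℝ) * Real.pi = 2 * (2 * Real.pi) := by ring
    rw [Real.log_mul (by positivity) (Real.exp_ne_zero 1), Real.log_exp, h4,
      Real.log_mul two_ne_zero (by positivity)]
  have hlog2pi : 0 ≤ Real.log (2 * Real.pi) :=
    Real.log_nonneg (by nlinarith [Real.pi_gt_three])
  have hlog2 : 0 ≤ Real.log 2 := Real.log_nonneg (by norm_num)
  have hlBnn : 0 ≤ Real.log (4 * Real.pi * Real.exp 1) := by rw [hlB]; linarith
  -- the if term
  have hι0 : 0 ≤ (if 2 ≤ K then Real.log ((K : ℝ) + 1) else 0) := by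
    split_ifs with h
    · exact Real.log_nonneg (by linarith)
    · exact le_refl 0
  have hι1 : (if 2 ≤ K then Real.log ((K : ℝ) + 1) else 0) ≤ 2 * ((K:ℝ) - 1) := by
    split_ifs with h
    · have hK2 : (2:ℝ) ≤ (K:ℝ) := by exact_mod_cast h
      have := Real.log_le_sub_one_of_pos (show (0:ℝ) < (K:ℝ) + 1 by linarith)
      linarith
    · linarith
  have hif0 : 0 ≤ (if 2 ≤ K then (1:ℝ) else 0) := by split_ifs <;> norm_num
  have hif1 : (if 2 ≤ K then (1:ℝ) else 0) ≤ (K:ℝ) - 1 := by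
    split_ifs with h
    · have : (2:ℝ) ≤ (K:ℝ) := by exact_mod_cast h
      linarith
    · have : K = 1 := by omega
      simp [this]
  -- log sums bounds
  have hlogA : ∀ l : Fin L, 0 ≤ Real.log ((A l : ℝ) + 1) ∧
      Real.log ((A l : ℝ) + 1) ≤ 2 * ((A l : ℝ) - 1) := by
    intro l
    have h2 := hAr l
    constructor
    · exact Real.log_nonneg (by linarith)
    · have := Real.log_le_sub_one_of_pos (show (0:ℝ) < (A l : ℝ) + 1 by linarith)
      linarith
  have hSBnn : 0 ≤ ∑ l ∈ S, Real.log ((A l : ℝ) + 1) :=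
    Finset.sum_nonneg fun l _ => (hlogA l).1
  have hSB : ∑ l ∈ S, Real.log ((A l : ℝ) + 1) ≤ 2 * sS := by
    rw [hsS_def, Finset.mul_sum]
    exact Finset.sum_le_sum fun l _ => (hlogA l).2
  have hSAnn : 0 ≤ ∑ l, Real.log ((A l : ℝ) + 1) :=
    Finset.sum_nonneg fun l _ => (hlogA l).1
  have hSA : ∑ l, Real.log ((A l : ℝ) + 1) ≤ 2 * (sS + sC) := by
    have hsplit : sS + sC = ∑ l, ((A l : ℝ) - 1) := Finset.sum_add_sum_compl S _
    rw [hsplit, Finset.mul_sum]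
    exact Finset.sum_le_sum fun l _ => (hlogA l).2
  -- T bounds
  set Tr : ℝ := (if 2 ≤ K then (1:ℝ) else 0) + (L:ℝ) + ((K:ℝ) - 1) * (S.card : ℝ)
    with hTr_def
  have hTrnn : 0 ≤ Tr := by
    rw [hTr_def]
    have : 0 ≤ ((K:ℝ) - 1) * (S.card : ℝ) := mul_nonneg (by linarith) hcardnn
    positivity
  have hTrD : Tr ≤ (Dks A K S : ℝ) := by
    rw [hTr_def, hcastD]
    have h1 : (K:ℝ) * (S.card : ℝ) ≤ (K:ℝ) * sS :=
      mul_le_mul_of_nonneg_left hsS0 (by linarith)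
    nlinarith [hif1]
  have hDnn : (0:ℝ) ≤ (Dks A K S : ℝ) := by positivity
  unfold Cks
  rw [hlA, hlB]
  constructor
  · have h1 : 0 ≤ (Real.log 2 + Real.log (2 * Real.pi) + 1) * Tr :=
      mul_nonneg (by linarith) hTrnn
    have h2 : 0 ≤ ((K:ℝ) - 1) * ∑ l ∈ S, Real.log ((A l : ℝ) + 1) :=
      mul_nonneg (by linarith) hSBnn
    rw [← hTr_def]
    nlinarith [hι0, hSAnn]
  · have h1 : (Real.log 2 + Real.log (2 * Real.pi) + 1) * Tr
        ≤ (Real.log 2 + Real.log (2 * Real.pi) + 1) * (Dks A K S : ℝ) :=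
      mul_le_mul_of_nonneg_left hTrD (by linarith)
    have h2 : ((K:ℝ) - 1) * ∑ l ∈ S, Real.log ((A l : ℝ) + 1)
        ≤ ((K:ℝ) - 1) * (2 * sS) :=
      mul_le_mul_of_nonneg_left hSB (by linarith)
    rw [← hTr_def]
    have h3 : ((K:ℝ) - 1) * (2 * sS) = 2 * ((K:ℝ) * sS) - 2 * sS := by ring
    have h4 : (2 + Real.log (2 * Real.pi) + Real.log 2 / 2) * (Dks A K S : ℝ)
        = ((Real.log (2 * Real.pi) + 1) * (Dks A K S : ℝ)
          + (Real.log 2 + Real.log (2 * Real.pi) + 1) * (Dks A K S : ℝ)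
          + 2 * (Dks A K S : ℝ)) / 2 := by ring
    rw [h4]
    have h5 : 2 * (Dks A K S : ℝ)
        = 2 * ((K:ℝ) - 1) + 2 * ((K:ℝ) * sS) + 2 * sC := by rw [hcastD]; ring
    clear_value sS sC Tr
    linarith [hι1, hSA, h1, h2, h3, h5]

end
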